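/- For every positive natural number n there exists a zero-dimensional scattered separable metrizable space that is n-homogeneous but not ℓ-homogeneous for any ℓ < n; a witness is the ordinal ω^n equipped with the order topology. -/

import Mathlib

open TopologicalSpace MeasureTheory Topology

/-- A space is *homogeneous* if its homeomorphism group acts transitively. -/
def HomogeneousSpace (X : Type*) [TopologicalSpace X] : Prop :=
  ∀ x y : X, ∃ h : X ≃ₜ X, h x = y

/-- A subset is a *homogeneous subspace* if it is homogeneous in the subspace topology. -/
def HomogeneousSubspace {X : Type*} [TopologicalSpace X] (S : Set X) : Prop :=
  ∀ x y : S, ∃ h : ↥S ≃ₜ ↥S, h x = y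

/-- A space is *zero-dimensional* if the clopen sets form a base. -/
def ZeroDimensionalSpace (X : Type*) [TopologicalSpace X] : Prop :=
  IsTopologicalBasis {s : Set X | IsClopen s}

/-- A space is *analytic* if it embeds onto an analytic subset of some Polish space. -/
def AnalyticSpace (X : Type*) [tX : TopologicalSpace X] : Prop :=
  ∃ (Z : Type) (tZ : TopologicalSpace Z), @PolishSpace Z tZ ∧
    ∃ j : X → Z, @IsEmbedding X Z tX tZ j ∧ @AnalyticSet Z tZ (Set.range j)

/-- A space is *coanalytic* if it embeds onto the complement of an analytic subset of some
Polish space. -/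
def CoanalyticSpace (X : Type*) [tX : TopologicalSpace X] : Prop :=
  ∃ (Z : Type) (tZ : TopologicalSpace Z), @PolishSpace Z tZ ∧
    ∃ j : X → Z, @IsEmbedding X Z tX tZ j ∧ @AnalyticSet Z tZ (Set.range j)ᶜ

/-- A space is *Borel* if it embeds onto a Borel subset of some Polish space. -/
def BorelSpacePaper (X : Type*) [tX : TopologicalSpace X] : Prop :=
  ∃ (Z : Type) (tZ : TopologicalSpace Z), @PolishSpace Z tZ ∧
    ∃ j : X → Z, @IsEmbedding X Z tX tZ j ∧ @MeasurableSet Z (@borel Z tZ) (Set.range j)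

/-- `A ∈ Σ¹₁(X)`: for some embedding `j` of `X` into a Polish space `Z`, `j '' A` is the
trace on `j '' X` of an analytic subset of `Z`. -/
def RelativelyAnalytic {X : Type*} [tX : TopologicalSpace X] (A : Set X) : Prop :=
  ∃ (Z : Type) (tZ : TopologicalSpace Z), @PolishSpace Z tZ ∧
    ∃ j : X → Z, @IsEmbedding X Z tX tZ j ∧
      ∃ A' : Set Z, @AnalyticSet Z tZ A' ∧ j '' A = A' ∩ Set.range j

/-- A subset of a space is `Σ¹₂` if it is a continuous image of a coanalytic subset of a
Polish space. -/
def Sigma12Set {Z : Type*} [tZ : TopologicalSpace Z] (s : Set Z) : Prop :=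
  ∃ (W : Type) (tW : TopologicalSpace W), @PolishSpace W tW ∧
    ∃ (C : Set W) (f : W → Z), @AnalyticSet W tW Cᶜ ∧ @ContinuousOn W Z tW tZ f C ∧ f '' C = s

/-- `A ∈ Δ¹₂(X)`: for some embedding `j` of `X` into a Polish space `Z`, both `j '' A` and
`j '' Aᶜ` are traces on `j '' X` of `Σ¹₂` subsets of `Z`. -/
def RelativelyDelta12 {X : Type*} [tX : TopologicalSpace X] (A : Set X) : Prop :=
  ∃ (Z : Type) (tZ : TopologicalSpace Z), @PolishSpace Z tZ ∧
    ∃ j : X → Z, @IsEmbedding X Z tX tZ j ∧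
      (∃ A' : Set Z, @Sigma12Set Z tZ A' ∧ j '' A = A' ∩ Set.range j) ∧
      (∃ B' : Set Z, @Sigma12Set Z tZ B' ∧ j '' Aᶜ = B' ∩ Set.range j)

/-- A space is *meager* if it is a meager subset of itself. -/
def MeagerSpace (X : Type*) [TopologicalSpace X] : Prop :=
  IsMeagre (Set.univ : Set X)

/-- A space is *Baire* if no non-empty open subset of it is meager (the definition used in
the paper). -/
def PaperBaireSpace (X : Type*) [TopologicalSpace X] : Prop :=
  ∀ U : Set X, IsOpen U → U.Nonempty → ¬ IsMeagre U

/-- A space is *nowhere countable* if it is non-empty and no non-empty open subset of it is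
countable. -/
def NowhereCountable (X : Type*) [TopologicalSpace X] : Prop :=
  Nonempty X ∧ ∀ U : Set X, IsOpen U → U.Nonempty → ¬ U.Countable

/-- The iterated Cantor–Bendixson derivative of a space: `cbDeriv X 0 = X`,
`cbDeriv X (ξ+1)` is `cbDeriv X ξ` minus its isolated points, and intersections are taken
at limit stages. -/
noncomputable def cbDeriv (X : Type*) [TopologicalSpace X] (o : Ordinal.{0}) : Set X :=
  Ordinal.limitRecOn o Set.univ
    (fun _ ih => {x ∈ ih | x ∈ closure (ih \ {x})})
    (fun o _ ih => ⋂ (p : Set.Iio o), ih p.1 p.2)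

/-- A space is *scattered* if some iterated Cantor–Bendixson derivative of it is empty. -/
def ScatteredSpace (X : Type*) [TopologicalSpace X] : Prop :=
  ∃ o : Ordinal.{0}, cbDeriv X o = ∅

/-- A space is *n-discrete* if it is the union of `n` discrete subspaces. -/
def NDiscrete (n : ℕ) (X : Type*) [TopologicalSpace X] : Prop :=
  ∃ D : Fin n → Set X, (∀ k, DiscreteTopology ↥(D k)) ∧ ⋃ k, D k = Set.univ

/-- A space is *n-homogeneous* if it is the union of `n` homogeneous subspaces. -/
def NHomogeneous (n : ℕ) (X : Type*) [TopologicalSpace X] : Prop :=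
  ∃ Y : Fin n → Set X, (∀ k, HomogeneousSubspace (Y k)) ∧ ⋃ k, Y k = Set.univ

/-- A space is *σ-homogeneous* if it is the union of countably many homogeneous
subspaces. -/
def SigmaHomogeneous (X : Type*) [TopologicalSpace X] : Prop :=
  ∃ Y : ℕ → Set X, (∀ n, HomogeneousSubspace (Y n)) ∧ ⋃ n, Y n = Set.univ

/-- An `Fσ` subset: a countable union of closed sets. -/
def IsFsigma {X : Type*} [TopologicalSpace X] (s : Set X) : Prop :=
  ∃ F : ℕ → Set X, (∀ n, IsClosed (F n)) ∧ s = ⋃ n, F n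

namespace OmegaAux
open Ordinal Set TopologicalSpace

/-- If `p` divides both `a` and `y` and `a < y` then `a + p ≤ y`. -/
lemma step_up {p a y : Ordinal} (hpa : p ∣ a) (hpy : p ∣ y) (h : a < y) : a + p ≤ y := by
  obtain ⟨b, rfl⟩ := hpa
  obtain ⟨c, rfl⟩ := hpy
  have hp0 : 0 < p := by
    rcases eq_zero_or_pos p with rfl | hp
    · simp at h
    · exact hp
  have hbc : b < c := (mul_lt_mul_iff_right₀ hp0).1 h
  calc p * b + p = p * Order.succ b := (Ordinal.mul_succ p b).symm
    _ ≤ p * c := mul_le_mul_right (Order.succ_le_of_lt hbc) p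

/-- decomposition of a non-limit multiple -/
lemma succ_decomp {k x : Ordinal} (hd : (ω ^ k) ∣ x) (hx : x ≠ 0)
    (hnd : ¬ (ω ^ (k + 1)) ∣ x) : ∃ a, (ω ^ k) ∣ a ∧ a + ω ^ k = x ∧ a < x := by
  obtain ⟨c, rfl⟩ := hd
  rcases Ordinal.zero_or_succ_or_isSuccLimit c with rfl | ⟨d, rfl⟩ | hc
  · simp at hx
  · refine ⟨ω ^ k * d, Dvd.intro d rfl, (Ordinal.mul_succ _ _).symm, ?_⟩
    rw [Ordinal.mul_succ]
    exact lt_add_of_pos_right _ (Ordinal.opow_pos _ Ordinal.omega0_pos)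
  · exfalso
    apply hnd
    obtain ⟨e, rfl⟩ := (Ordinal.isSuccLimit_iff_omega0_dvd.1 hc).2
    exact ⟨e, by rw [Ordinal.opow_add, Ordinal.opow_one, mul_assoc]⟩

/-- below a nonzero multiple of `ω^(k+1)`, nonzero multiples of `ω^k` are cofinal -/
lemma dense_mult {k x b : Ordinal} (hd : (ω ^ (k + 1)) ∣ x) (hx : x ≠ 0) (hb : b < x) :
    ∃ y, b < y ∧ y < x ∧ y ≠ 0 ∧ (ω ^ k) ∣ y := by
  have hk0 : (0:Ordinal) < ω ^ k := Ordinal.opow_pos _ Ordinal.omega0_pos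
  set q := b / ω ^ k with hq
  refine ⟨ω ^ k * (q + 1), ?_, ?_, ?_, Dvd.intro _ rfl⟩
  · have h1 := Ordinal.div_add_mod b (ω ^ k)
    have h2 : b % ω ^ k < ω ^ k := Ordinal.mod_lt b hk0.ne'
    calc b = ω ^ k * q + b % ω ^ k := h1.symm
      _ < ω ^ k * q + ω ^ k := by exact add_lt_add_right h2 _
      _ = ω ^ k * (q + 1) := by rw [mul_add, mul_one]
  · have hle : ω ^ k * q + ω ^ k ≤ x := by
      apply step_up (Dvd.intro _ rfl) (dvd_trans (Ordinal.opow_dvd_opow ω (le_self_add (a := k) (b := 1))) hd)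
      calc ω ^ k * q ≤ b := by
            conv_rhs => rw [← Ordinal.div_add_mod b (ω ^ k)]
            exact le_self_add
        _ < x := hb
    have heq : ω ^ k * (q + 1) = ω ^ k * q + ω ^ k := by rw [mul_add, mul_one]
    rcases lt_or_eq_of_le (heq ▸ hle) with h | h
    · exact h
    · exfalso
      obtain ⟨e, he⟩ := hd
      rw [Ordinal.opow_add, Ordinal.opow_one, mul_assoc] at he
      have hqe : q + 1 = ω * e := by
        have := h.trans he
        exact (mul_left_cancel_iff_of_pos hk0).1 this
      have he0 : e ≠ 0 := by
        rintro rfl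
        simp [he] at hx
      have hlim : Order.IsSuccLimit (ω * e) :=
        Ordinal.isSuccLimit_mul_left Ordinal.isSuccLimit_omega0 (pos_iff_ne_zero.2 he0)
      rw [← hqe] at hlim
      have := hlim.succ_lt (lt_add_one q)
      rw [Ordinal.add_one_eq_succ] at this
      exact this.false
  · exact (mul_pos hk0 (by exact lt_of_lt_of_le zero_lt_one (le_add_self (a := 1) (b := q)))).ne'



lemma cbDeriv_zero (X : Type*) [TopologicalSpace X] : cbDeriv X 0 = Set.univ :=
  Ordinal.limitRecOn_zero _ _ _

lemma cbDeriv_succ (X : Type*) [TopologicalSpace X] (o : Ordinal) :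
    cbDeriv X (Order.succ o) = {x ∈ cbDeriv X o | x ∈ closure (cbDeriv X o \ {x})} :=
  Ordinal.limitRecOn_succ _ _ _ _

lemma isClopen_Ioc (b c : Ordinal) : IsClopen (Set.Ioc b c) := by
  constructor
  · have : Set.Ioc b c = Set.Ici (Order.succ b) ∩ Set.Iic c := by
      ext y; simp [Order.succ_le_iff]
    rw [this]; exact IsClosed.inter isClosed_Ici isClosed_Iic
  · have : Set.Ioc b c = Set.Ioi b ∩ Set.Iio (Order.succ c) := by
      ext y; simp [Order.lt_succ_iff]
    rw [this]; exact IsOpen.inter isOpen_Ioi isOpen_Iio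

lemma isClopen_Iic_zero : IsClopen (Set.Iic (0 : Ordinal)) := by
  constructor
  · exact isClosed_Iic
  · have : Set.Iic (0:Ordinal) = Set.Iio 1 := by
      ext y; simp [Ordinal.lt_one_iff_zero, nonpos_iff_eq_zero]
    rw [this]; exact isOpen_Iio

lemma discrete_of_isolated {X : Type*} [TopologicalSpace X] {S : Set X}
    (h : ∀ x ∈ S, ∃ U : Set X, IsOpen U ∧ U ∩ S = {x}) : DiscreteTopology ↥S := by
  rw [discreteTopology_iff_isOpen_singleton]
  rintro ⟨x, hx⟩
  obtain ⟨U, hU, hUS⟩ := h x hx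
  have hxU : x ∈ U ∩ S := by rw [hUS]; rfl
  have heq : {(⟨x, hx⟩ : ↥S)} = Subtype.val ⁻¹' U := by
    ext ⟨y, hy⟩
    simp only [Set.mem_singleton_iff, Set.mem_preimage, Subtype.mk.injEq]
    constructor
    · intro h; exact h ▸ hxU.1
    · intro hyU
      have : y ∈ U ∩ S := ⟨hyU, hy⟩
      rw [hUS] at this; exact this
  rw [heq]
  exact hU.preimage continuous_subtype_val

lemma isolated_of_discrete {X : Type*} [TopologicalSpace X] {S : Set X}
    (h : DiscreteTopology ↥S) {x : X} (hx : x ∈ S) :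
    ∃ U : Set X, IsOpen U ∧ U ∩ S = {x} := by
  have hop : IsOpen {(⟨x, hx⟩ : ↥S)} := isOpen_discrete _
  rw [isOpen_induced_iff] at hop
  obtain ⟨U, hU, hpre⟩ := hop
  refine ⟨U, hU, ?_⟩
  have hxU : (⟨x, hx⟩ : ↥S) ∈ Subtype.val ⁻¹' U := by rw [hpre]; rfl
  ext y
  constructor
  · rintro ⟨hyU, hyS⟩
    have : (⟨y, hyS⟩ : ↥S) ∈ Subtype.val ⁻¹' U := hyU
    rw [hpre] at this
    exact congrArg Subtype.val this
  · intro h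
    exact h ▸ ⟨hxU, hx⟩

lemma discrete_homog {X : Type*} [TopologicalSpace X] {S : Set X}
    (h : DiscreteTopology ↥S) : HomogeneousSubspace S := fun x y => by
  classical
  exact ⟨⟨Equiv.swap x y, continuous_of_discreteTopology, continuous_of_discreteTopology⟩,
    Equiv.swap_apply_left x y⟩

/-- every homogeneous subspace of an initial segment of the ordinals is discrete -/
lemma homog_discrete {O : Ordinal} {S : Set ↥(Set.Iio O)} (h : HomogeneousSubspace S) :
    DiscreteTopology ↥S := by
  rw [discreteTopology_iff_isOpen_singleton]
  intro a
  obtain ⟨aa, ha⟩ := a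
  have hT : (Subtype.val '' S).Nonempty := ⟨aa.1, aa, ha, rfl⟩
  obtain ⟨m, hmT, hmin⟩ := Ordinal.lt_wf.has_min _ hT
  obtain ⟨x₀, hx₀S, hx₀⟩ := hmT
  -- the singleton of x₀ is open in S
  have hopen : IsOpen {(⟨x₀, hx₀S⟩ : ↥S)} := by
    have : {(⟨x₀, hx₀S⟩ : ↥S)} =
        Subtype.val ⁻¹' ((Subtype.val ⁻¹' (Set.Iio (m + 1))) : Set ↥(Set.Iio O)) := by
      ext ⟨y, hyS⟩
      simp only [Set.mem_singleton_iff, Set.mem_preimage, Subtype.mk.injEq]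
      constructor
      · rintro rfl; rw [hx₀]; exact lt_add_one m
      · intro hy
        have hy2 : y.1 < m + 1 := hy
        rw [Ordinal.add_one_eq_succ, Order.lt_succ_iff] at hy2
        have hy' : y.1 ≤ m := hy2
        have : ¬ y.1 < m := hmin y.1 ⟨y, hyS, rfl⟩
        have hym : y.1 = m := le_antisymm hy' (not_lt.1 this)
        apply Subtype.ext
        exact hym.trans hx₀.symm
    rw [this]
    exact ((isOpen_Iio.preimage continuous_subtype_val).preimage continuous_subtype_val)
  obtain ⟨e, he⟩ := h ⟨x₀, hx₀S⟩ ⟨aa, ha⟩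
  have : ({⟨aa, ha⟩} : Set ↥S) = e.symm ⁻¹' {(⟨x₀, hx₀S⟩ : ↥S)} := by
    ext z
    simp only [Set.mem_singleton_iff, Set.mem_preimage]
    constructor
    · intro hz
      rw [hz, ← he, Homeomorph.symm_apply_apply]
    · intro hz
      rw [← e.apply_symm_apply z, hz, he]
  rw [this]
  exact e.symm.isOpen_preimage.2 hopen





/-- nonzero multiples of `ω^k` lie in the `k`-th Cantor-Bendixson derivative -/
lemma mult_mem_cbDeriv {O : Ordinal} (k : ℕ) :
    ∀ x : ↥(Set.Iio O), x.1 ≠ 0 → (ω ^ (k : Ordinal)) ∣ x.1 →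
      x ∈ cbDeriv ↥(Set.Iio O) (k : Ordinal) := by
  induction k with
  | zero =>
    intro x _ _
    rw [Nat.cast_zero, cbDeriv_zero]
    trivial
  | succ k ih =>
    intro x hx0 hd
    rw [Nat.cast_succ] at hd
    rw [Nat.cast_succ, Ordinal.add_one_eq_succ, cbDeriv_succ]
    have hd' : (ω ^ (k : Ordinal)) ∣ x.1 :=
      dvd_trans (Ordinal.opow_dvd_opow ω le_self_add) hd
    refine ⟨ih x hx0 hd', ?_⟩
    rw [mem_closure_iff]
    intro U hU hxU
    rw [isOpen_induced_iff] at hU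
    obtain ⟨V, hV, rfl⟩ := hU
    have hxV : x.1 ∈ V := hxU
    have hlim : Order.IsSuccLimit x.1 := by
      rw [Ordinal.isSuccLimit_iff_omega0_dvd]
      refine ⟨hx0, dvd_trans ?_ hd⟩
      simpa using Ordinal.opow_dvd_opow ω (le_add_self (a := 1) (b := (k : Ordinal)))
    obtain ⟨a, ha, haV⟩ := (Ordinal.isOpen_iff.1 hV) x.1 hxV hlim
    obtain ⟨y, hby, hyx, hy0, hyd⟩ := dense_mult hd hx0 ha
    have hyO : y < O := lt_trans hyx x.2
    refine ⟨⟨y, hyO⟩, ?_, ?_, ?_⟩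
    · exact haV ⟨hby, hyx⟩
    · exact ih ⟨y, hyO⟩ hy0 hyd
    · intro hmem
      rw [Set.mem_singleton_iff, Subtype.ext_iff] at hmem
      exact hyx.ne hmem


/-- the `k`-th derivative consists of multiples of `ω^k` -/
lemma cbDeriv_subset_mult {O : Ordinal} (k : ℕ) :
    cbDeriv ↥(Set.Iio O) (k : Ordinal) ⊆ {x | (ω ^ (k : Ordinal)) ∣ x.1} := by
  induction k with
  | zero =>
    intro x _
    simp
  | succ k ih =>
    intro x hx
    rw [Nat.cast_succ, Ordinal.add_one_eq_succ, cbDeriv_succ] at hx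
    obtain ⟨hx1, hx2⟩ := hx
    have hd : (ω ^ (k : Ordinal)) ∣ x.1 := ih hx1
    rw [Set.mem_setOf_eq, Nat.cast_succ]
    by_cases hx0 : x.1 = 0
    · rw [hx0]; exact dvd_zero _
    by_contra hnd
    obtain ⟨a, had, haeq, halt⟩ := succ_decomp hd hx0 hnd
    rw [mem_closure_iff] at hx2
    have hUopen : IsOpen (Subtype.val ⁻¹' (Set.Ioc a x.1) : Set ↥(Set.Iio O)) :=
      (isClopen_Ioc a x.1).2.preimage continuous_subtype_val
    obtain ⟨y, hyU, hyD, hyne⟩ := hx2 _ hUopen ⟨halt, le_refl _⟩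
    have hyd : (ω ^ (k : Ordinal)) ∣ y.1 := ih hyD
    have : a + ω ^ (k : Ordinal) ≤ y.1 := step_up had hyd hyU.1
    rw [haeq] at this
    exact hyne (Set.mem_singleton_iff.2 (Subtype.ext (le_antisymm hyU.2 this)))


/-- the counting lemma -/
lemma counting {X : Type*} [TopologicalSpace X] [T1Space X] {ℓ : ℕ} {D : Fin ℓ → Set X}
    (hD : ∀ i, DiscreteTopology ↥(D i)) (hcov : ⋃ i, D i = Set.univ) :
    ∀ (k : ℕ) (x : X) (U : Set X), x ∈ cbDeriv X (k : Ordinal) → IsOpen U → x ∈ U →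
      ∃ s : Finset (Fin ℓ), k + 1 ≤ s.card ∧ ∀ i ∈ s, (U ∩ D i).Nonempty := by
  have hmem : ∀ x : X, ∃ j, x ∈ D j := by
    intro x
    have : x ∈ ⋃ i, D i := hcov ▸ Set.mem_univ x
    exact Set.mem_iUnion.1 this
  intro k
  induction k with
  | zero =>
    intro x U _ hU hxU
    obtain ⟨j, hj⟩ := hmem x
    exact ⟨{j}, by simp, fun i hi => by
      rw [Finset.mem_singleton] at hi
      exact ⟨x, hxU, hi ▸ hj⟩⟩
  | succ k ih =>
    intro x U hx hU hxU
    rw [Nat.cast_succ, Ordinal.add_one_eq_succ, cbDeriv_succ] at hx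
    obtain ⟨hx1, hx2⟩ := hx
    obtain ⟨j, hj⟩ := hmem x
    obtain ⟨V, hV, hVD⟩ := isolated_of_discrete (hD j) hj
    have hxV : x ∈ V := by
      have : x ∈ V ∩ D j := by rw [hVD]; rfl
      exact this.1
    rw [mem_closure_iff] at hx2
    obtain ⟨y, hyUV, hyD, hyne⟩ := hx2 (U ∩ V) (hU.inter hV) ⟨hxU, hxV⟩
    set W : Set X := (U ∩ V) ∩ {x}ᶜ with hW
    have hWopen : IsOpen W := (hU.inter hV).inter isOpen_compl_singleton
    have hyW : y ∈ W := ⟨hyUV, hyne⟩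
    obtain ⟨s, hcard, hs⟩ := ih y W hyD hWopen hyW
    have hjs : j ∉ s := by
      intro hjmem
      obtain ⟨z, hzW, hzD⟩ := hs j hjmem
      have : z ∈ V ∩ D j := ⟨hzW.1.2, hzD⟩
      rw [hVD] at this
      exact hzW.2 this
    refine ⟨insert j s, ?_, ?_⟩
    · rw [Finset.card_insert_of_notMem hjs]
      omega
    · intro i hi
      rcases Finset.mem_insert.1 hi with rfl | hi'
      · exact ⟨x, hxU, hj⟩
      · obtain ⟨z, hzW, hzD⟩ := hs i hi'
        exact ⟨z, hzW.1.1, hzD⟩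




/-- basic clopen neighborhoods in the ordinals -/
lemma nbhd_basic {x : Ordinal} {V : Set Ordinal} (hV : IsOpen V) (hxV : x ∈ V) :
    ∃ W : Set Ordinal, IsClopen W ∧ x ∈ W ∧ W ⊆ V ∧
      (W = Set.Iic 0 ∨ ∃ b c, b ≤ x ∧ c = x ∧ W = Set.Ioc b c) := by
  rcases Ordinal.zero_or_succ_or_isSuccLimit x with rfl | ⟨b, rfl⟩ | hlim
  · refine ⟨Set.Iic 0, isClopen_Iic_zero, Set.self_mem_Iic, ?_, Or.inl rfl⟩
    intro y hy
    have : y = 0 := le_antisymm hy (zero_le (a := y))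
    rwa [this]
  · refine ⟨Set.Ioc b (Order.succ b), isClopen_Ioc _ _,
      ⟨Order.lt_succ b, le_refl _⟩, ?_,
      Or.inr ⟨b, Order.succ b, Order.le_succ b, rfl, rfl⟩⟩
    · intro y hy
      have : y = Order.succ b := le_antisymm hy.2 (Order.succ_le_of_lt hy.1)
      rwa [this]
  · obtain ⟨a, hax, haV⟩ := (Ordinal.isOpen_iff.1 hV) x hxV hlim
    refine ⟨Set.Ioc a x, isClopen_Ioc _ _, ⟨hax, le_refl _⟩, ?_,
      Or.inr ⟨a, x, hax.le, rfl, rfl⟩⟩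
    intro y hy
    rcases lt_or_eq_of_le hy.2 with h | h
    · exact haV ⟨hy.1, h⟩
    · rwa [h]

lemma zeroDim (O : Ordinal) :
    IsTopologicalBasis {s : Set ↥(Set.Iio O) | IsClopen s} := by
  apply isTopologicalBasis_of_isOpen_of_nhds
  · exact fun s hs => hs.2
  · intro a u hau hu
    rw [isOpen_induced_iff] at hu
    obtain ⟨V, hV, rfl⟩ := hu
    obtain ⟨W, hWclopen, haW, hWV, _⟩ := nbhd_basic hV hau
    exact ⟨Subtype.val ⁻¹' W, hWclopen.preimage continuous_subtype_val, haW,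
      fun y hy => hWV hy⟩

lemma secondCountable (O : Ordinal) [Countable ↥(Set.Iio O)] :
    SecondCountableTopology ↥(Set.Iio O) := by
  classical
  set f : Option (↥(Set.Iio O) × ↥(Set.Iio O)) → Set ↥(Set.Iio O) := fun p =>
    match p with
    | none => Subtype.val ⁻¹' (Set.Iic 0)
    | some (b, c) => Subtype.val ⁻¹' (Set.Ioc b.1 c.1) with hf
  apply IsTopologicalBasis.secondCountableTopology (b := Set.range f)
  · apply isTopologicalBasis_of_isOpen_of_nhds
    · rintro s ⟨p, rfl⟩
      match p with
      | none => exact isClopen_Iic_zero.2.preimage continuous_subtype_val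
      | some (b, c) => exact (isClopen_Ioc b.1 c.1).2.preimage continuous_subtype_val
    · intro a u hau hu
      rw [isOpen_induced_iff] at hu
      obtain ⟨V, hV, rfl⟩ := hu
      obtain ⟨W, hWclopen, haW, hWV, hshape⟩ := nbhd_basic hV hau
      rcases hshape with rfl | ⟨b, c, hb, hc, rfl⟩
      · exact ⟨Subtype.val ⁻¹' (Set.Iic 0), ⟨none, rfl⟩, haW, fun y hy => hWV hy⟩
      · have hbO : b < O := lt_of_le_of_lt hb (hc ▸ a.2)
        have hcO : c < O := hc ▸ a.2
        exact ⟨Subtype.val ⁻¹' (Set.Ioc b c), ⟨some (⟨b, hbO⟩, ⟨c, hcO⟩), rfl⟩,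
          haW, fun y hy => hWV hy⟩
  · exact Set.countable_range f

universe u_cnt

lemma countable_Iio (n : ℕ) : Countable ↥(Set.Iio (ω ^ (n : Ordinal.{u_cnt}))) := by
  rw [← Cardinal.mk_le_aleph0_iff, Ordinal.mk_Iio_ordinal]
  rw [show (Cardinal.aleph0 : Cardinal.{u_cnt+1}) = Cardinal.lift.{u_cnt+1, u_cnt} Cardinal.aleph0
    from Cardinal.lift_aleph0.symm, Cardinal.lift_le]
  induction n with
  | zero => simp
  | succ k ih =>
    rw [Nat.cast_succ, Ordinal.opow_add, Ordinal.opow_one, Ordinal.card_mul,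
      Ordinal.card_omega0]
    calc (ω ^ (k : Ordinal)).card * Cardinal.aleph0 ≤ Cardinal.aleph0 * Cardinal.aleph0 :=
        mul_le_mul' ih (le_refl _)
      _ = Cardinal.aleph0 := Cardinal.aleph0_mul_aleph0



section Classes
variable (n : ℕ)

/-- the rank classes -/
def cls (i : Fin n) : Set ↥(Set.Iio (ω ^ (n : Ordinal))) :=
  {x | (ω ^ ((i : ℕ) : Ordinal)) ∣ x.1 ∧
    ((i : ℕ) + 1 < n → ¬ (ω ^ (((i : ℕ) + 1 : ℕ) : Ordinal)) ∣ x.1)}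

lemma cls_discrete (i : Fin n) : DiscreteTopology ↥(cls n i) := by
  apply discrete_of_isolated
  rintro x ⟨hd, hcond⟩
  by_cases hx0 : x.1 = 0
  · refine ⟨Subtype.val ⁻¹' (Set.Iic 0), isClopen_Iic_zero.2.preimage continuous_subtype_val, ?_⟩
    ext y
    constructor
    · rintro ⟨hyU, hyD⟩
      have : y.1 = 0 := le_antisymm hyU zero_le
      exact Set.mem_singleton_iff.2 (Subtype.ext (this.trans hx0.symm))
    · intro h
      rw [Set.mem_singleton_iff] at h
      subst h
      exact ⟨Set.mem_preimage.2 (hx0.le), ⟨hd, hcond⟩⟩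
  · have hnd : ¬ (ω ^ (((i : ℕ) : Ordinal) + 1)) ∣ x.1 := by
      by_cases hi : (i : ℕ) + 1 < n
      · have := hcond hi
        rwa [Nat.cast_add_one] at this
      · have hieq : (i : ℕ) + 1 = n := by have := i.isLt; omega
        intro hdvd
        have hcast : ((i : ℕ) : Ordinal) + 1 = ((n : ℕ) : Ordinal) := by
          have h2 := congrArg (Nat.cast (R := Ordinal)) hieq
          push_cast at h2
          exact h2
        rw [hcast] at hdvd
        exact absurd x.2 (not_lt.2 (Ordinal.le_of_dvd hx0 hdvd))
    obtain ⟨a, had, haeq, halt⟩ := succ_decomp hd hx0 hnd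
    refine ⟨Subtype.val ⁻¹' (Set.Ioc a x.1),
      (isClopen_Ioc a x.1).2.preimage continuous_subtype_val, ?_⟩
    ext y
    constructor
    · rintro ⟨hyU, hyD⟩
      have h1 : a + ω ^ ((i : ℕ) : Ordinal) ≤ y.1 := step_up had hyD.1 hyU.1
      rw [haeq] at h1
      exact Set.mem_singleton_iff.2 (Subtype.ext (le_antisymm hyU.2 h1))
    · intro h
      rw [Set.mem_singleton_iff] at h
      subst h
      exact ⟨⟨halt, le_refl _⟩, ⟨hd, hcond⟩⟩

lemma cls_cover (hn : 0 < n) : ⋃ i, cls n i = Set.univ := by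
  classical
  rw [Set.eq_univ_iff_forall]
  intro x
  rw [Set.mem_iUnion]
  by_cases hd : (ω ^ ((n - 1 : ℕ) : Ordinal)) ∣ x.1
  · refine ⟨⟨n - 1, by omega⟩, hd, ?_⟩
    intro h
    exact absurd (show n - 1 + 1 < n from h) (by omega)
  · have hn2 : 2 ≤ n := by
      by_contra hcon
      have hn1 : n = 1 := by omega
      subst hn1
      exact hd (by simp)
    have hex : ¬ (ω ^ ((n - 2 + 1 : ℕ) : Ordinal)) ∣ x.1 := by
      have : n - 2 + 1 = n - 1 := by omega
      rwa [this]
    set P : ℕ → Prop := fun m => ¬ (ω ^ ((m + 1 : ℕ) : Ordinal)) ∣ x.1 with hP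
    have hPex : ∃ m, P m := ⟨n - 2, hex⟩
    have hspec : P (Nat.find hPex) := Nat.find_spec hPex
    have hkle : Nat.find hPex ≤ n - 2 := Nat.find_le hex
    obtain ⟨k, hk⟩ : ∃ k, Nat.find hPex = k := ⟨_, rfl⟩
    rw [hk] at hspec hkle
    have hdk : (ω ^ ((k : ℕ) : Ordinal)) ∣ x.1 := by
      rcases Nat.eq_zero_or_pos k with hk0 | hkpos
      · subst hk0; simp
      · obtain ⟨m, hm⟩ := Nat.exists_eq_succ_of_ne_zero hkpos.ne'
        have hmin := Nat.find_min hPex (show m < Nat.find hPex by omega)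
        rw [hP] at hmin
        have hdd : (ω ^ ((m + 1 : ℕ) : Ordinal)) ∣ x.1 := not_not.1 hmin
        have hms : m.succ = m + 1 := rfl
        rw [hm, hms]
        exact hdd
    exact ⟨⟨k, by omega⟩, hdk, fun _ => hspec⟩

lemma scattered_aux : cbDeriv ↥(Set.Iio (ω ^ (n : Ordinal))) ((n : Ordinal) + 1) = ∅ := by
  rw [Ordinal.add_one_eq_succ, cbDeriv_succ]
  rw [Set.eq_empty_iff_forall_notMem]
  rintro x ⟨hx1, hx2⟩
  have hsub : cbDeriv ↥(Set.Iio (ω ^ (n : Ordinal))) (n : Ordinal) ⊆ {y | y.1 = 0} := by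
    intro y hy
    have hdvd := cbDeriv_subset_mult n hy
    by_contra h0
    exact absurd y.2 (not_lt.2 (Ordinal.le_of_dvd h0 hdvd))
  have hempty : cbDeriv ↥(Set.Iio (ω ^ (n : Ordinal))) (n : Ordinal) \ {x} = ∅ := by
    rw [Set.eq_empty_iff_forall_notMem]
    rintro y ⟨hy1, hy2⟩
    exact hy2 (Set.mem_singleton_iff.2 (Subtype.ext ((hsub hy1).trans (hsub hx1).symm)))
  rw [hempty, closure_empty] at hx2
  exact hx2

lemma not_ell_homog (hn : 0 < n) {ℓ : ℕ} (hℓ : ℓ < n) :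
    ¬ NHomogeneous ℓ ↥(Set.Iio (ω ^ (n : Ordinal))) := by
  rintro ⟨Y, hY, hcov⟩
  have hYdisc : ∀ i, DiscreteTopology ↥(Y i) := fun i => homog_discrete (hY i)
  have hp : ω ^ ((n - 1 : ℕ) : Ordinal) < ω ^ (n : Ordinal) := by
    rw [Ordinal.opow_lt_opow_iff_right Ordinal.one_lt_omega0]
    exact_mod_cast (by omega : n - 1 < n)
  set p : ↥(Set.Iio (ω ^ (n : Ordinal))) := ⟨_, hp⟩ with hpdef
  have hpmem : p ∈ cbDeriv ↥(Set.Iio (ω ^ (n : Ordinal))) (ℓ : Ordinal) := by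
    apply mult_mem_cbDeriv ℓ p
    · exact (Ordinal.opow_pos _ Ordinal.omega0_pos).ne'
    · exact Ordinal.opow_dvd_opow ω (by exact_mod_cast (by omega : ℓ ≤ n - 1))
  obtain ⟨s, hcard, _⟩ := counting hYdisc hcov ℓ p Set.univ hpmem isOpen_univ (Set.mem_univ p)
  have : s.card ≤ ℓ := by
    have := Finset.card_le_univ s
    simpa using this
  omega

end Classes

lemma separable_Iio (n : ℕ) : SeparableSpace ↥(Set.Iio (ω ^ (n : Ordinal.{u_cnt}))) := by
  haveI := countable_Iio.{u_cnt} n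
  infer_instance

lemma metrizable_Iio (n : ℕ) : MetrizableSpace ↥(Set.Iio (ω ^ (n : Ordinal.{u_cnt}))) := by
  haveI := countable_Iio.{u_cnt} n
  haveI := secondCountable (ω ^ (n : Ordinal.{u_cnt}))
  infer_instance

lemma nhomog_n (n : ℕ) (hn : 0 < n) : NHomogeneous n ↥(Set.Iio (ω ^ (n : Ordinal))) :=
  ⟨cls n, fun k => discrete_homog (cls_discrete n k), cls_cover n hn⟩

end OmegaAux


/-- For every `0 < n < ω`, the ordinal `ω ^ n` with the order topology is a
zero-dimensional scattered separable metrizable space that is `n`-homogeneous but not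
`ℓ`-homogeneous for any `ℓ < n`. -/
theorem omega_pow_n_homogeneous (n : ℕ) (hn : 0 < n) :
    ZeroDimensionalSpace ↥(Set.Iio (Ordinal.omega0 ^ (n : Ordinal))) ∧
    ScatteredSpace ↥(Set.Iio (Ordinal.omega0 ^ (n : Ordinal))) ∧
    SeparableSpace ↥(Set.Iio (Ordinal.omega0 ^ (n : Ordinal))) ∧
    MetrizableSpace ↥(Set.Iio (Ordinal.omega0 ^ (n : Ordinal))) ∧
    NHomogeneous n ↥(Set.Iio (Ordinal.omega0 ^ (n : Ordinal))) ∧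
    ∀ ℓ, ℓ < n → ¬ NHomogeneous ℓ ↥(Set.Iio (Ordinal.omega0 ^ (n : Ordinal))) := by
  exact ⟨OmegaAux.zeroDim _, ⟨(n : Ordinal) + 1, OmegaAux.scattered_aux n⟩,
    OmegaAux.separable_Iio n, OmegaAux.metrizable_Iio n,
    OmegaAux.nhomog_n n hn, fun ℓ hℓ => OmegaAux.not_ell_homog n hn hℓ⟩
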